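/- Let X be a T₀ space and 𝒦 an irreducible subset of the Smyth power space P_S(X). If U is an open set of X with K \ U ≠ ∅ for every K ∈ 𝒦, then {↑(K \ U) : K ∈ 𝒦} is an irreducible subset of P_S(X). -/

import Mathlib

open Set

/-- Specialization order: `x ≤ y` iff `x ∈ cl {y}`. -/
def specLE {X : Type} [TopologicalSpace X] (x y : X) : Prop := x ∈ closure {y}

/-- Upward closure w.r.t. the specialization order. -/
def upClosure {X : Type} [TopologicalSpace X] (A : Set X) : Set X :=
  {y | ∃ a ∈ A, specLE a y}

/-- The underlying set of the Smyth power space: nonempty compact saturated subsets. -/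
def SmythPS (X : Type) [TopologicalSpace X] : Type :=
  {K : Set X // K.Nonempty ∧ IsCompact K ∧ ∀ x ∈ K, ∀ y, specLE x y → y ∈ K}

/-- `□U = {K ∈ Q(X) : K ⊆ U}`. -/
def boxU {X : Type} [TopologicalSpace X] (U : Set X) : Set (SmythPS X) :=
  {K : SmythPS X | K.1 ⊆ U}

/-- The upper Vietoris topology on the Smyth power space. -/
instance smythTop (X : Type) [TopologicalSpace X] : TopologicalSpace (SmythPS X) :=
  TopologicalSpace.generateFrom {S : Set (SmythPS X) | ∃ U : Set X, IsOpen U ∧ S = boxU U}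

/-- The cut `A^δ = (A^↑)^↓` w.r.t. the specialization order. -/
def cutD {X : Type} [TopologicalSpace X] (A : Set X) : Set X :=
  {x | ∀ u : X, (∀ a ∈ A, specLE a u) → specLE x u}

/-- `U` is SI₂-open. -/
def SI2Open {X : Type} [TopologicalSpace X] (U : Set X) : Prop :=
  IsOpen U ∧ ∀ F : Set X, IsIrreducible F → (cutD F ∩ U).Nonempty → (F ∩ U).Nonempty

/-- `le` makes `I` the index of a net: nonempty, reflexive, transitive, directed. -/
def IsNetOrder {I : Type} (le : I → I → Prop) : Prop :=
  Nonempty I ∧ (∀ i, le i i) ∧ (∀ i j k, le i j → le j k → le i k) ∧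
    (∀ i j, ∃ k, le i k ∧ le j k)

/-- GSI₂-convergence of the net `xi` (indexed by `(I, le)`) to `x`. -/
def GSI2Conv {X : Type} [TopologicalSpace X] {I : Type} (le : I → I → Prop)
    (xi : I → X) (x : X) : Prop :=
  ∃ 𝒢 : Set (Set X), (∀ G ∈ 𝒢, G.Finite ∧ G.Nonempty) ∧
    IsIrreducible {K : SmythPS X | ∃ G ∈ 𝒢, K.1 = upClosure G} ∧
    (∀ U : Set X, IsOpen U → (∃ G ∈ 𝒢, upClosure G ⊆ U) →
      ∃ i₀, ∀ i, le i₀ i → xi i ∈ U) ∧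
    (⋂ G ∈ 𝒢, upClosure G) ⊆ upClosure {x}

/-- `A ≪_{I₂} B`. -/
def WayBelowI2 {X : Type} [TopologicalSpace X] (A B : Set X) : Prop :=
  ∀ D : Set X, IsIrreducible D → (cutD D ∩ B).Nonempty → (A ∩ closure D).Nonempty

/-- `w(x) = {↑F : F nonempty finite, F ≪_{I₂} x}` as a subset of the Smyth power space. -/
def wPS {X : Type} [TopologicalSpace X] (x : X) : Set (SmythPS X) :=
  {K : SmythPS X | ∃ F : Set X, F.Finite ∧ F.Nonempty ∧ WayBelowI2 F {x} ∧ K.1 = upClosure F}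

/-- QI₂-continuity. -/
def QI2Continuous (X : Type) [TopologicalSpace X] : Prop :=
  ∀ x : X, IsIrreducible (wPS x) ∧ upClosure {x} = ⋂ K ∈ wPS x, (K.1 : Set X)

/-- Strong QI₂-continuity. -/
def StronglyQI2Continuous (X : Type) [TopologicalSpace X] : Prop :=
  QI2Continuous X ∧
  ∀ (F : Set X) (x : X) (U : Set X), F.Finite → F.Nonempty → WayBelowI2 F {x} →
    IsOpen U → F ⊆ U → ∃ W : Set X, SI2Open W ∧ x ∈ W ∧ W ⊆ U

lemma specLE_refl {X : Type} [TopologicalSpace X] (x : X) : specLE x x :=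
  subset_closure rfl

lemma specLE_trans {X : Type} [TopologicalSpace X] {x y z : X}
    (h1 : specLE x y) (h2 : specLE y z) : specLE x z := by
  have : closure {y} ⊆ closure {z} := by
    rw [show ({y} : Set X) = {y} from rfl]
    exact closure_minimal (by simpa [Set.singleton_subset_iff, specLE] using h2) isClosed_closure
  exact this h1

lemma open_upclosed {X : Type} [TopologicalSpace X] {V : Set X} (hV : IsOpen V)
    {x y : X} (hx : x ∈ V) (hxy : specLE x y) : y ∈ V := by
  have := (mem_closure_iff.1 hxy) V hV hx
  rcases this with ⟨z, hzV, hz⟩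
  rcases hz with rfl
  exact hzV

lemma subset_upClosure {X : Type} [TopologicalSpace X] (A : Set X) : A ⊆ upClosure A :=
  fun a ha => ⟨a, ha, specLE_refl a⟩

lemma upClosure_subset_open {X : Type} [TopologicalSpace X] {A V : Set X} (hV : IsOpen V)
    (h : A ⊆ V) : upClosure A ⊆ V := by
  rintro y ⟨a, ha, hay⟩
  exact open_upclosed hV (h ha) hay

lemma isCompact_upClosure {X : Type} [TopologicalSpace X] {C : Set X} (hC : IsCompact C) :
    IsCompact (upClosure C) := by
  apply isCompact_of_finite_subcover
  intro ι W hW hcov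
  rcases hC.elim_finite_subcover W hW ((subset_upClosure C).trans hcov) with ⟨t, ht⟩
  exact ⟨t, upClosure_subset_open (isOpen_biUnion fun i _ => hW i) ht⟩

/-- Build the element `↑(K \ U)` of the Smyth power space. -/
def smythDiff {X : Type} [TopologicalSpace X] (K : SmythPS X) (U : Set X) (hU : IsOpen U)
    (hne : (K.1 \ U).Nonempty) : SmythPS X :=
  ⟨upClosure (K.1 \ U),
    hne.mono (subset_upClosure _),
    isCompact_upClosure (K.2.2.1.diff hU),
    by
      rintro x ⟨a, ha, hax⟩ y hxy
      exact ⟨a, ha, specLE_trans hax hxy⟩⟩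

lemma boxU_isOpen {X : Type} [TopologicalSpace X] {V : Set X} (hV : IsOpen V) :
    IsOpen (boxU V : Set (SmythPS X)) :=
  TopologicalSpace.GenerateOpen.basic _ ⟨V, hV, rfl⟩

lemma smyth_basis {X : Type} [TopologicalSpace X] (O : Set (SmythPS X)) (hO : IsOpen O) :
    ∀ L ∈ O, ∃ V : Set X, IsOpen V ∧ L ∈ boxU V ∧ boxU V ⊆ O := by
  induction hO with
  | basic S hS =>
    rcases hS with ⟨V, hV, rfl⟩
    exact fun L hL => ⟨V, hV, hL, subset_rfl⟩
  | univ =>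
    exact fun L _ => ⟨Set.univ, isOpen_univ, fun _ _ => trivial, fun _ _ => trivial⟩
  | inter S T _ _ ihS ihT =>
    intro L hL
    rcases ihS L hL.1 with ⟨V, hV, hLV, hVS⟩
    rcases ihT L hL.2 with ⟨W, hW, hLW, hWT⟩
    refine ⟨V ∩ W, hV.inter hW, fun x hx => ⟨hLV hx, hLW hx⟩,
      fun M hM => ⟨hVS fun x hx => (hM hx).1, hWT fun x hx => (hM hx).2⟩⟩
  | sUnion 𝒮 _ ih =>
    rintro L ⟨S, hS, hLS⟩
    rcases ih S hS L hLS with ⟨V, hV, hLV, hVS⟩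
    exact ⟨V, hV, hLV, hVS.trans (Set.subset_sUnion_of_mem hS)⟩

theorem stmt9 {X : Type} [TopologicalSpace X] [T0Space X] (𝒦 : Set (SmythPS X))
    (h𝒦 : IsIrreducible 𝒦) (U : Set X) (hU : IsOpen U)
    (hmeet : ∀ K ∈ 𝒦, (K.1 \ U).Nonempty) :
    IsIrreducible {L : SmythPS X | ∃ K ∈ 𝒦, L.1 = upClosure (K.1 \ U)} := by
  constructor
  · rcases h𝒦.1 with ⟨K, hK⟩
    exact ⟨smythDiff K U hU (hmeet K hK), K, hK, rfl⟩
  · intro O₁ O₂ hO₁ hO₂ h₁ h₂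
    rcases h₁ with ⟨L₁, ⟨K₁, hK₁, hL₁⟩, hL₁O⟩
    rcases h₂ with ⟨L₂, ⟨K₂, hK₂, hL₂⟩, hL₂O⟩
    rcases smyth_basis O₁ hO₁ L₁ hL₁O with ⟨V, hV, hL₁V, hVO₁⟩
    rcases smyth_basis O₂ hO₂ L₂ hL₂O with ⟨W, hW, hL₂W, hWO₂⟩
    -- K₁ ⊆ U ∪ V, K₂ ⊆ U ∪ W
    have hK₁sub : K₁ ∈ boxU (U ∪ V) := by
      intro x hx
      by_cases hxU : x ∈ U
      · exact Or.inl hxU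
      · exact Or.inr (hL₁V (hL₁ ▸ subset_upClosure _ ⟨hx, hxU⟩))
    have hK₂sub : K₂ ∈ boxU (U ∪ W) := by
      intro x hx
      by_cases hxU : x ∈ U
      · exact Or.inl hxU
      · exact Or.inr (hL₂W (hL₂ ▸ subset_upClosure _ ⟨hx, hxU⟩))
    rcases h𝒦.2 (boxU (U ∪ V)) (boxU (U ∪ W)) (boxU_isOpen (hU.union hV))
      (boxU_isOpen (hU.union hW)) ⟨K₁, hK₁, hK₁sub⟩ ⟨K₂, hK₂, hK₂sub⟩ with
      ⟨K, hK, hKV, hKW⟩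
    have hdiffV : K.1 \ U ⊆ V := fun x hx => (hKV hx.1).resolve_left hx.2
    have hdiffW : K.1 \ U ⊆ W := fun x hx => (hKW hx.1).resolve_left hx.2
    refine ⟨smythDiff K U hU (hmeet K hK), ⟨K, hK, rfl⟩,
      hVO₁ (upClosure_subset_open hV hdiffV), hWO₂ (upClosure_subset_open hW hdiffW)⟩
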